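/- (Proposition 1) The maximin information is bounded by the maximal leakage: $I_*(S;X) \leq L_0(S \to X)$. Equivalently, in cardinality form: $|\mathcal{P}^*| \cdot \min_{x \in \llbracket X\rrbracket} |\llbracket S\mid x\rrbracket| \leq |\llbracket S\rrbracket|$, where $\mathcal{P}^*$ is the set of equivalence classes of overlap connectedness on $\llbracket S\rrbracket$; hence $\log_2 |\mathcal{P}^*| \leq \max_{x \in \llbracket X\rrbracket} \log_2 (|\llbracket S\rrbracket| / |\llbracket S\mid x\rrbracket|)$. -/

import Mathlib

/-- The conditional range `⟦S∣x⟧ = {S(ω) : ω ∈ Ω, X(ω) = x}`. -/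
def condRange {Ω 𝕊 𝕏 : Type*} (S : Ω → 𝕊) (X : Ω → 𝕏) (x : 𝕏) : Set 𝕊 :=
  {s | ∃ ω, X ω = x ∧ S ω = s}

/-- Overlap connectedness: `s ↭ s'` iff there is a finite sequence `x₁,…,xₙ ∈ ⟦X⟧` with
`s ∈ ⟦S∣x₁⟧`, `s' ∈ ⟦S∣xₙ⟧` and consecutive conditional ranges intersecting. -/
def OverlapConn {Ω 𝕊 𝕏 : Type*} (S : Ω → 𝕊) (X : Ω → 𝕏) (s s' : 𝕊) : Prop :=
  ∃ n : ℕ, ∃ xs : Fin (n + 1) → 𝕏,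
    (∀ i, xs i ∈ Set.range X) ∧
    s ∈ condRange S X (xs 0) ∧ s' ∈ condRange S X (xs (Fin.last n)) ∧
    ∀ i : Fin n, (condRange S X (xs i.castSucc) ∩ condRange S X (xs i.succ)).Nonempty

/-- The set `𝒫*` of equivalence classes of overlap connectedness on `⟦S⟧`. -/
def overlapClasses {Ω 𝕊 𝕏 : Type*} (S : Ω → 𝕊) (X : Ω → 𝕏) : Set (Set 𝕊) :=
  {C | ∃ s ∈ Set.range S, C = {s' | OverlapConn S X s s'}}

section Aux

variable {Ω 𝕊 𝕏 : Type*} (S : Ω → 𝕊) (X : Ω → 𝕏)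

/-- One-step overlap relation. -/
def OvStep (s t : 𝕊) : Prop :=
  ∃ x, x ∈ Set.range X ∧ s ∈ condRange S X x ∧ t ∈ condRange S X x

variable {S X}

lemma ovStep_symm : Symmetric (OvStep S X) := by
  rintro s t ⟨x, hx, hs, ht⟩; exact ⟨x, hx, ht, hs⟩

lemma overlapConn_imp_rtg {s t : 𝕊} (h : OverlapConn S X s t) :
    Relation.ReflTransGen (OvStep S X) s t := by
  obtain ⟨n, xs, hmem, hs, ht, hov⟩ := h
  induction n generalizing s with
  | zero =>
    exact Relation.ReflTransGen.single ⟨xs 0, hmem 0, hs, ht⟩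
  | succ n ih =>
    obtain ⟨u, hu0, hu1⟩ := hov 0
    have h01 : ((0 : Fin (n + 1)).castSucc) = (0 : Fin (n + 2)) := rfl
    rw [h01] at hu0
    have hstep : OvStep S X s u := ⟨xs 0, hmem 0, hs, hu0⟩
    have htail : Relation.ReflTransGen (OvStep S X) u t := by
      apply ih (xs := fun i => xs i.succ) (fun i => hmem _) _ _ _
      · simpa using hu1
      · simpa [Fin.succ_last] using ht
      · intro i
        have := hov i.succ
        exact this
    exact (Relation.ReflTransGen.single hstep).trans htail

lemma rtg_imp_overlapConn {s t : 𝕊} (hs : s ∈ Set.range S)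
    (h : Relation.ReflTransGen (OvStep S X) s t) : OverlapConn S X s t := by
  induction h with
  | refl =>
    obtain ⟨ω, hω⟩ := hs
    exact ⟨0, fun _ => X ω, fun _ => ⟨ω, rfl⟩, ⟨ω, rfl, hω⟩, ⟨ω, rfl, hω⟩,
      fun i => i.elim0⟩
  | tail hab hbc ih =>
    obtain ⟨n, xs, hmem, hs', hb, hov⟩ := ih
    obtain ⟨x, hx, hbx, hcx⟩ := hbc
    refine ⟨n + 1, Fin.snoc xs x, ?_, ?_, ?_, ?_⟩
    · intro i
      refine Fin.lastCases ?_ (fun j => ?_) i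
      · simpa [Fin.snoc_last] using hx
      · simpa [Fin.snoc_castSucc] using hmem j
    · have h0 : ((0 : Fin (n + 1)).castSucc) = (0 : Fin (n + 2)) := rfl
      rw [← h0, Fin.snoc_castSucc]; exact hs'
    · simpa [Fin.snoc_last] using hcx
    · intro i
      refine Fin.lastCases ?_ (fun j => ?_) i
      · rw [Fin.succ_last, Fin.snoc_last, Fin.snoc_castSucc]
        exact ⟨_, hb, hbx⟩
      · rw [Fin.succ_castSucc, Fin.snoc_castSucc, Fin.snoc_castSucc]
        exact hov j

lemma overlapConn_self {s : 𝕊} (hs : s ∈ Set.range S) : OverlapConn S X s s :=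
  rtg_imp_overlapConn hs Relation.ReflTransGen.refl

lemma mem_range_of_overlapConn {s t : 𝕊} (h : OverlapConn S X s t) :
    t ∈ Set.range S := by
  obtain ⟨n, xs, _, _, ⟨ω, _, hω⟩, _⟩ := h
  exact ⟨ω, hω⟩

lemma class_eq_of_common {s s' u : 𝕊} (hs : s ∈ Set.range S) (hs' : s' ∈ Set.range S)
    (h1 : OverlapConn S X s u) (h2 : OverlapConn S X s' u) :
    {t | OverlapConn S X s t} = {t | OverlapConn S X s' t} := by
  have r1 := overlapConn_imp_rtg h1
  have r2 := overlapConn_imp_rtg h2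
  have rss' : Relation.ReflTransGen (OvStep S X) s s' :=
    r1.trans ((@Relation.ReflTransGen.stdSymm _ _ ⟨fun _ _ h => ovStep_symm h⟩).symm _ _ r2)
  ext t
  constructor
  · intro ht
    exact rtg_imp_overlapConn hs'
      (((@Relation.ReflTransGen.stdSymm _ _ ⟨fun _ _ h => ovStep_symm h⟩).symm _ _ rss').trans (overlapConn_imp_rtg ht))
  · intro ht
    exact rtg_imp_overlapConn hs (rss'.trans (overlapConn_imp_rtg ht))

end Aux

/-- Proposition 1: `I⋆(S;X) ≤ L₀(S → X)`.  In cardinality form,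
`|𝒫*| · min_{x ∈ ⟦X⟧} |⟦S∣x⟧| ≤ |⟦S⟧|`; hence
`log₂ |𝒫*| ≤ max_{x ∈ ⟦X⟧} log₂(|⟦S⟧| / |⟦S∣x⟧|)`. -/
theorem maximin_le_maximal_leakage {Ω 𝕊 𝕏 : Type*} [Nonempty Ω] [Fintype 𝕊] [Fintype 𝕏]
    (S : Ω → 𝕊) (X : Ω → 𝕏) :
    (overlapClasses S X).ncard * sInf ((fun x => (condRange S X x).ncard) '' Set.range X)
      ≤ (Set.range S).ncard
    ∧ Real.logb 2 (((overlapClasses S X).ncard : ℝ)) ≤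
      ⨆ x : Set.range X,
        Real.logb 2 (((Set.range S).ncard : ℝ) / ((condRange S X (x : 𝕏)).ncard : ℝ)) := by
  classical
  obtain ⟨ω₀⟩ := ‹Nonempty Ω›
  set m := sInf ((fun x => (condRange S X x).ncard) '' Set.range X) with hm
  -- the minimum is attained at some x₀ ∈ range X
  have himg : ((fun x => (condRange S X x).ncard) '' Set.range X).Nonempty :=
    ⟨_, Set.mem_image_of_mem _ ⟨ω₀, rfl⟩⟩
  obtain ⟨x₀, hx₀, hx₀m⟩ := Nat.sInf_mem himg
  -- m ≤ ncard of any conditional range over range X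
  have hmle : ∀ x ∈ Set.range X, m ≤ (condRange S X x).ncard := fun x hx =>
    Nat.sInf_le (Set.mem_image_of_mem _ hx)
  -- each conditional range of x = X ω is contained in the class of S ω
  have hcond_sub : ∀ ω : Ω, condRange S X (X ω) ⊆ {t | OverlapConn S X (S ω) t} := by
    intro ω t ht
    exact ⟨0, fun _ => X ω, fun _ => ⟨ω, rfl⟩, ⟨ω, rfl, rfl⟩, ht, fun i => i.elim0⟩
  -- Part 1
  have hpart1 : (overlapClasses S X).ncard * m ≤ (Set.range S).ncard := by
    set P : Finset (Set 𝕊) := (Set.toFinite (overlapClasses S X)).toFinset with hP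
    have hPmem : ∀ C, C ∈ P ↔ C ∈ overlapClasses S X := by
      intro C; simp only [hP, Set.Finite.mem_toFinset]
    set t : Set 𝕊 → Finset 𝕊 := fun C => (Set.toFinite C).toFinset with htdef
    have hdisj : ∀ C ∈ P, ∀ D ∈ P, C ≠ D → Disjoint (t C) (t D) := by
      intro C hC D hD hne
      by_contra hnd
      obtain ⟨u, huC, huD⟩ := Finset.not_disjoint_iff.mp hnd
      obtain ⟨s, hs, rfl⟩ := (hPmem C).mp hC
      obtain ⟨s', hs', rfl⟩ := (hPmem D).mp hD
      simp only [htdef, Set.Finite.mem_toFinset] at huC huD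
      exact hne (class_eq_of_common hs hs' huC huD)
    have hsub : P.biUnion t ⊆ (Set.toFinite (Set.range S)).toFinset := by
      intro u hu
      obtain ⟨C, hC, huC⟩ := Finset.mem_biUnion.mp hu
      obtain ⟨s, hs, rfl⟩ := (hPmem C).mp hC
      simp only [htdef, Set.Finite.mem_toFinset] at huC ⊢
      exact mem_range_of_overlapConn huC
    have hcard_ge : ∀ C ∈ P, m ≤ (t C).card := by
      intro C hC
      obtain ⟨s, ⟨ω, hω⟩, rfl⟩ := (hPmem C).mp hC
      have hsubC : condRange S X (X ω) ⊆ {t | OverlapConn S X s t} := by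
        rw [← hω]; exact hcond_sub ω
      calc m ≤ (condRange S X (X ω)).ncard := hmle _ ⟨ω, rfl⟩
        _ ≤ ({t | OverlapConn S X s t} : Set 𝕊).ncard :=
            Set.ncard_le_ncard hsubC (Set.toFinite _)
        _ = (t {t | OverlapConn S X s t}).card := Set.ncard_eq_toFinset_card _ _
    calc (overlapClasses S X).ncard * m = P.card * m := by
          rw [Set.ncard_eq_toFinset_card _ (Set.toFinite _)]
      _ = P.card • m := by rw [smul_eq_mul]
      _ ≤ ∑ C ∈ P, (t C).card := Finset.card_nsmul_le_sum P _ m hcard_ge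
      _ = (P.biUnion t).card := (Finset.card_biUnion hdisj).symm
      _ ≤ ((Set.toFinite (Set.range S)).toFinset).card := Finset.card_le_card hsub
      _ = (Set.range S).ncard := (Set.ncard_eq_toFinset_card _ _).symm
  refine ⟨hpart1, ?_⟩
  -- Part 2
  have hmx : m = (condRange S X x₀).ncard := by rw [hm, ← hx₀m]
  have hm_pos : 0 < m := by
    rw [hmx]
    obtain ⟨ω, hω⟩ := hx₀
    exact (Set.ncard_pos (Set.toFinite _)).mpr ⟨_, ⟨ω, hω, rfl⟩⟩
  have hk_pos : 0 < (overlapClasses S X).ncard := by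
    refine (Set.ncard_pos (Set.toFinite _)).mpr ?_
    exact ⟨{t | OverlapConn S X (S ω₀) t}, ⟨S ω₀, ⟨ω₀, rfl⟩, rfl⟩⟩
  set k := (overlapClasses S X).ncard
  set N := (Set.range S).ncard
  have hN_pos : 0 < N := (Set.ncard_pos (Set.toFinite _)).mpr ⟨S ω₀, ⟨ω₀, rfl⟩⟩
  have hkm : (k : ℝ) ≤ (N : ℝ) / (m : ℝ) := by
    rw [le_div_iff₀ (by exact_mod_cast hm_pos)]
    exact_mod_cast hpart1
  have hlog : Real.logb 2 (k : ℝ) ≤ Real.logb 2 ((N : ℝ) / (m : ℝ)) := by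
    refine (Real.logb_le_logb (by norm_num) (by exact_mod_cast hk_pos) ?_).mpr hkm
    exact div_pos (by exact_mod_cast hN_pos) (by exact_mod_cast hm_pos)
  refine hlog.trans ?_
  have hbdd : BddAbove (Set.range fun x : Set.range X =>
      Real.logb 2 ((N : ℝ) / ((condRange S X (x : 𝕏)).ncard : ℝ))) :=
    Set.Finite.bddAbove (Set.finite_range _)
  have := le_ciSup hbdd (⟨x₀, hx₀⟩ : Set.range X)
  rw [hmx]
  exact this
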